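/- Let n, W, M be positive integers and let \Delta(\alpha) = \sum_{k=0}^{2n-1} c_k \alpha^k be a nonzero polynomial with integer coefficients satisfying |c_k| \leq 2 n W M^{2n-1} \binom{2n-1}{k} for all k. Write \Delta(1-\epsilon) = \sum_{i=0}^{2n-1} (-1)^i g_i \epsilon^i, where g_i = \sum_{k=i}^{2n-1} c_k \binom{k}{i}, and let j be the smallest index such that g_j \neq 0. Then the polynomial \epsilon \mapsto \Delta(1-\epsilon) has no real zero in the open interval (0, \, 2^{j-1}/(n W (2M)^{2n-1} \binom{2n-1}{j+1})). -/

import Mathlib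

lemma aux_sum_choose (m i : ℕ) (him : i ≤ m) :
    ∑ k ∈ Finset.Icc i m, m.choose k * k.choose i = m.choose i * 2 ^ (m - i) := by
  have h1 : ∀ k ∈ Finset.Icc i m,
      m.choose k * k.choose i = m.choose i * (m - i).choose (k - i) := by
    intro k hk
    simp only [Finset.mem_Icc] at hk
    exact Nat.choose_mul hk.1
  rw [Finset.sum_congr rfl h1, ← Finset.mul_sum]
  congr 1
  rw [← Nat.sum_range_choose (m - i), ← Finset.Ico_add_one_right_eq_Icc, Finset.sum_Ico_eq_sum_range]
  simp only [Nat.add_sub_cancel_left]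
  rw [show m + 1 - i = m - i + 1 by omega]

lemma aux_choose_pow (m a : ℕ) : ∀ t, m.choose (a + t) ≤ m.choose a * m ^ t := by
  intro t; induction t with
  | zero => simp
  | succ t ih =>
    have hstep : m.choose (a + t + 1) ≤ m.choose (a + t) * m := by
      have h1 : m.choose (a + t + 1) ≤ m.choose (a + t + 1) * (a + t + 1) :=
        Nat.le_mul_of_pos_right _ (by omega)
      rw [Nat.choose_succ_right_eq] at h1
      exact h1.trans (Nat.mul_le_mul_left _ (Nat.sub_le _ _))
    calc m.choose (a + (t + 1)) = m.choose (a + t + 1) := by rw [← Nat.add_assoc]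
      _ ≤ m.choose (a + t) * m := hstep
      _ ≤ m.choose a * m ^ t * m := Nat.mul_le_mul_right _ ih
      _ = m.choose a * m ^ (t + 1) := by rw [pow_succ, Nat.mul_assoc]

set_option maxHeartbeats 1600000 in
/-- Let `Δ = ∑_{k=0}^{2n-1} c_k α^k` be a nonzero integer polynomial with
`|c_k| ≤ 2 n W M^(2n-1) binom(2n-1, k)` for all `k`. Writing `Δ(1-ε) = ∑ (-1)^i g_i ε^i`
with `g_i = ∑_{k=i}^{2n-1} c_k binom(k, i)`, if `j` is the smallest index with `g_j ≠ 0`,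
then `ε ↦ Δ(1-ε)` has no real zero in `(0, 2^(j-1)/(n W (2M)^(2n-1) binom(2n-1, j+1)))`. -/
theorem stmt_8 (n W M : ℕ) (hn : 0 < n) (hW : 0 < W) (hM : 0 < M)
    (Δ : Polynomial ℤ) (hΔ : Δ ≠ 0) (hdeg : Δ.natDegree ≤ 2 * n - 1)
    (hcoeff : ∀ k, |Δ.coeff k| ≤ 2 * (n : ℤ) * (W : ℤ) * (M : ℤ) ^ (2 * n - 1) *
      ((2 * n - 1).choose k : ℤ))
    (g : ℕ → ℤ)
    (hg : ∀ i, g i = ∑ k ∈ Finset.Icc i (2 * n - 1), Δ.coeff k * (k.choose i : ℤ))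
    (j : ℕ) (hlow : ∀ i, i < j → g i = 0) (hgj : g j ≠ 0) :
    ∀ ε : ℝ, 0 < ε →
      ε < (2 : ℝ) ^ ((j : ℤ) - 1) /
        ((n : ℝ) * (W : ℝ) * (2 * (M : ℝ)) ^ (2 * n - 1) * ((2 * n - 1).choose (j + 1) : ℝ)) →
      Polynomial.aeval (1 - ε) Δ ≠ 0 := by
  intro ε hε hεT
  set m := 2 * n - 1 with hm
  have hm1 : 1 ≤ m := by omega
  clear_value m
  -- degenerate case: choose = 0
  by_cases hC : m.choose (j + 1) = 0
  · exfalso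
    rw [hC] at hεT
    norm_num at hεT
    linarith
  have hjm : j + 1 ≤ m := by
    by_contra h
    exact hC (Nat.choose_eq_zero_of_lt (by omega))
  have hC1 : (0:ℝ) < (m.choose (j+1) : ℝ) := by
    exact_mod_cast Nat.pos_of_ne_zero hC
  set C1 : ℝ := (m.choose (j+1) : ℝ) with hC1def
  set D : ℝ := (n : ℝ) * (W : ℝ) * (2 * (M : ℝ)) ^ m * C1 with hD
  clear_value C1 D
  have hnR : (1:ℝ) ≤ (n:ℝ) := by exact_mod_cast hn
  have hWR : (1:ℝ) ≤ (W:ℝ) := by exact_mod_cast hW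
  have hMR : (1:ℝ) ≤ (M:ℝ) := by exact_mod_cast hM
  have hDpos : 0 < D := by
    rw [hD]; positivity
  have hDε : ε * D < 2 ^ j / 2 := by
    have h2 : (2:ℝ) ^ ((j:ℤ) - 1) = 2 ^ j / 2 := by
      rw [zpow_sub₀ (by norm_num : (2:ℝ) ≠ 0), zpow_one, zpow_natCast]
    have := (lt_div_iff₀ hDpos).mp hεT
    rwa [h2] at this
  -- ε is small: m * ε < 1/2
  have h2m : (2:ℝ) ^ m ≤ (2 * (M:ℝ)) ^ m :=
    pow_le_pow_left₀ (by norm_num) (by linarith) m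
  have hC1' : (1:ℝ) ≤ C1 := by
    rw [hC1def]; exact_mod_cast Nat.one_le_iff_ne_zero.mpr hC
  have hD_ge : (n:ℝ) * 2 ^ m ≤ D := by
    rw [hD]
    calc (n:ℝ) * 2 ^ m ≤ ((n:ℝ) * W) * (2 * (M:ℝ)) ^ m := by
          apply mul_le_mul _ h2m (by positivity) (by positivity)
          nlinarith
      _ ≤ ((n:ℝ) * W) * (2 * (M:ℝ)) ^ m * C1 :=
          le_mul_of_one_le_right (by positivity) hC1'
      _ = _ := by ring
  have h2jm : (2:ℝ) ^ j * 2 ≤ 2 ^ m := by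
    have : (2:ℝ) ^ j * 2 = 2 ^ (j+1) := by rw [pow_succ]
    rw [this]
    exact pow_le_pow_right₀ (by norm_num) hjm
  have hnε : (n:ℝ) * ε < 1 / 4 := by
    have h1 : ε * ((n:ℝ) * 2 ^ m) ≤ ε * D := by
      apply mul_le_mul_of_nonneg_left hD_ge (le_of_lt hε)
    nlinarith [pow_pos (show (0:ℝ) < 2 by norm_num) j, pow_pos (show (0:ℝ) < 2 by norm_num) m]
  have hmε : (m:ℝ) * ε < 1 / 2 := by
    have : (m:ℝ) ≤ 2 * n := by
      rw [hm]; exact_mod_cast Nat.sub_le (2*n) 1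
    nlinarith
  -- expansion: Δ(1-ε) = ∑ (-ε)^i g_i
  have hgR : ∀ i, (g i : ℝ) = ∑ k ∈ Finset.Icc i m, (Δ.coeff k : ℝ) * (k.choose i : ℝ) := by
    intro i
    rw [hg i]
    push_cast
    rfl
  have hdeg' : Δ.natDegree < m + 1 := by omega
  have expand : (Polynomial.aeval (1 - ε) Δ : ℝ)
      = ∑ i ∈ Finset.range (m + 1), (-ε) ^ i * (g i : ℝ) := by
    rw [Polynomial.aeval_eq_sum_range' hdeg']
    have h1 : ∀ k : ℕ, ((1:ℝ) - ε) ^ k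
        = ∑ i ∈ Finset.range (k + 1), (-ε) ^ i * (k.choose i : ℝ) := by
      intro k
      have h := add_pow (-ε) (1:ℝ) k
      simp only [one_pow, mul_one] at h
      rw [show (1:ℝ) - ε = -ε + 1 by ring, h]
    calc ∑ k ∈ Finset.range (m + 1), Δ.coeff k • ((1:ℝ) - ε) ^ k
        = ∑ k ∈ Finset.range (m + 1), ∑ i ∈ Finset.range (k + 1),
            (-ε) ^ i * ((Δ.coeff k : ℝ) * (k.choose i : ℝ)) := by
          refine Finset.sum_congr rfl fun k _ => ?_
          rw [zsmul_eq_mul, h1 k, Finset.mul_sum]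
          exact Finset.sum_congr rfl fun i _ => by ring
      _ = ∑ i ∈ Finset.range (m + 1), ∑ k ∈ Finset.Icc i m,
            (-ε) ^ i * ((Δ.coeff k : ℝ) * (k.choose i : ℝ)) := by
          simp only [Finset.range_eq_Ico, ← Finset.Ico_add_one_right_eq_Icc]
          exact (Finset.sum_Ico_Ico_comm 0 (m + 1)
            (fun i k => (-ε) ^ i * ((Δ.coeff k : ℝ) * (k.choose i : ℝ)))).symm
      _ = ∑ i ∈ Finset.range (m + 1), (-ε) ^ i * (g i : ℝ) := by
          refine Finset.sum_congr rfl fun i _ => ?_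
          rw [hgR i, Finset.mul_sum]
  -- split off the first term
  have hsplit : ∑ i ∈ Finset.range (m + 1), (-ε) ^ i * (g i : ℝ)
      = (-ε) ^ j * (g j : ℝ) + ∑ i ∈ Finset.Ico (j + 1) (m + 1), (-ε) ^ i * (g i : ℝ) := by
    rw [Finset.range_eq_Ico,
      ← Finset.sum_Ico_consecutive _ (Nat.zero_le j) (by omega : j ≤ m + 1)]
    have hzero : ∑ i ∈ Finset.Ico 0 j, (-ε) ^ i * (g i : ℝ) = 0 := by
      apply Finset.sum_eq_zero
      intro i hi
      simp only [Finset.mem_Ico] at hi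
      rw [hlow i hi.2]
      simp
    rw [hzero, zero_add, Finset.sum_eq_sum_Ico_succ_bot (by omega : j < m + 1)]
  set B : ℝ := 2 * (n : ℝ) * W * (M : ℝ) ^ m with hB
  clear_value B
  have hBpos : 0 < B := by rw [hB]; positivity
  have hcoeffR : ∀ k, |(Δ.coeff k : ℝ)| ≤ B * (m.choose k : ℝ) := by
    intro k
    rw [hB]
    exact_mod_cast hcoeff k
  have hsum : ∀ i, i ≤ m → ∑ k ∈ Finset.Icc i m, (m.choose k : ℝ) * (k.choose i : ℝ)
      = (m.choose i : ℝ) * 2 ^ (m - i) := by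
    intro i hi2
    calc ∑ k ∈ Finset.Icc i m, (m.choose k : ℝ) * (k.choose i : ℝ)
        = ((∑ k ∈ Finset.Icc i m, m.choose k * k.choose i : ℕ) : ℝ) := by
          push_cast; rfl
      _ = ((m.choose i * 2 ^ (m - i) : ℕ) : ℝ) := by rw [aux_sum_choose m i hi2]
      _ = (m.choose i : ℝ) * 2 ^ (m - i) := by push_cast; rfl
  have hgb : ∀ i, i ≤ m → |(g i : ℝ)| ≤ B * ((m.choose i : ℝ) * 2 ^ (m - i)) := by
    intro i hi2
    rw [hgR i]
    calc |∑ k ∈ Finset.Icc i m, (Δ.coeff k : ℝ) * (k.choose i : ℝ)|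
        ≤ ∑ k ∈ Finset.Icc i m, |(Δ.coeff k : ℝ) * (k.choose i : ℝ)| :=
          Finset.abs_sum_le_sum_abs _ _
      _ ≤ ∑ k ∈ Finset.Icc i m, B * ((m.choose k : ℝ) * (k.choose i : ℝ)) := by
          apply Finset.sum_le_sum
          intro k _
          rw [abs_mul, abs_of_nonneg (show (0:ℝ) ≤ (k.choose i : ℝ) by positivity)]
          calc |(Δ.coeff k : ℝ)| * (k.choose i : ℝ)
              ≤ (B * (m.choose k : ℝ)) * (k.choose i : ℝ) :=
                mul_le_mul_of_nonneg_right (hcoeffR k) (by positivity)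
            _ = B * ((m.choose k : ℝ) * (k.choose i : ℝ)) := by ring
      _ = B * ((m.choose i : ℝ) * 2 ^ (m - i)) := by
          rw [← Finset.mul_sum, hsum i hi2]
  -- bound the tail
  have htail : |∑ i ∈ Finset.Ico (j + 1) (m + 1), (-ε) ^ i * (g i : ℝ)|
      ≤ (4 / 3) * (B * C1 * 2 ^ (m - j - 1) * ε ^ (j + 1)) := by
    have hterm : ∀ t ∈ Finset.range (m - j),
        ε ^ (j + 1 + t) * |(g (j + 1 + t) : ℝ)|
          ≤ (B * C1 * 2 ^ (m - j - 1) * ε ^ (j + 1)) * (1 / 4) ^ t := by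
      intro t ht
      simp only [Finset.mem_range] at ht
      have ht' : j + 1 + t ≤ m := by omega
      have hgi := hgb (j + 1 + t) ht'
      have hch : (m.choose (j + 1 + t) : ℝ) ≤ C1 * (m : ℝ) ^ t := by
        rw [hC1def]
        exact_mod_cast aux_choose_pow m (j + 1) t
      have h2e : (2 : ℝ) ^ (m - (j + 1 + t)) * 2 ^ t = 2 ^ (m - j - 1) := by
        rw [← pow_add]; congr 1; omega
      have hεpow : ε ^ (j + 1 + t) = ε ^ (j + 1) * ε ^ t := by rw [← pow_add]
      have hmet : ((m : ℝ) * ε / 2) ^ t ≤ (1 / 4) ^ t := by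
        apply pow_le_pow_left₀ (by positivity) (by linarith)
      have h2t : (0:ℝ) < 2 ^ t := by positivity
      calc ε ^ (j + 1 + t) * |(g (j + 1 + t) : ℝ)|
          ≤ ε ^ (j + 1 + t) * (B * ((m.choose (j + 1 + t) : ℝ) * 2 ^ (m - (j + 1 + t)))) :=
            mul_le_mul_of_nonneg_left hgi (by positivity)
        _ ≤ ε ^ (j + 1 + t) * (B * ((C1 * (m : ℝ) ^ t) * 2 ^ (m - (j + 1 + t)))) := by
            apply mul_le_mul_of_nonneg_left _ (by positivity)
            apply mul_le_mul_of_nonneg_left _ hBpos.le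
            exact mul_le_mul_of_nonneg_right hch (by positivity)
        _ = (B * C1 * 2 ^ (m - j - 1) * ε ^ (j + 1)) * ((m : ℝ) * ε / 2) ^ t := by
            rw [div_pow, mul_pow, hεpow, ← h2e]
            field_simp
        _ ≤ (B * C1 * 2 ^ (m - j - 1) * ε ^ (j + 1)) * (1 / 4) ^ t :=
            mul_le_mul_of_nonneg_left hmet (by positivity)
    have hgeo : ∑ t ∈ Finset.range (m - j), ((1:ℝ) / 4) ^ t ≤ 4 / 3 := by
      rw [geom_sum_eq (by norm_num : (1:ℝ) / 4 ≠ 1)]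
      have h0 : (0:ℝ) ≤ ((1:ℝ) / 4) ^ (m - j) := by positivity
      have hre : (((1:ℝ) / 4) ^ (m - j) - 1) / ((1:ℝ) / 4 - 1)
          = (1 - ((1:ℝ) / 4) ^ (m - j)) * (4 / 3) := by ring
      rw [hre]
      nlinarith
    calc |∑ i ∈ Finset.Ico (j + 1) (m + 1), (-ε) ^ i * (g i : ℝ)|
        ≤ ∑ i ∈ Finset.Ico (j + 1) (m + 1), |(-ε) ^ i * (g i : ℝ)| :=
          Finset.abs_sum_le_sum_abs _ _
      _ = ∑ i ∈ Finset.Ico (j + 1) (m + 1), ε ^ i * |(g i : ℝ)| := by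
          refine Finset.sum_congr rfl fun i _ => ?_
          rw [abs_mul, abs_pow, abs_neg, abs_of_pos hε]
      _ = ∑ t ∈ Finset.range (m - j), ε ^ (j + 1 + t) * |(g (j + 1 + t) : ℝ)| := by
          rw [Finset.sum_Ico_eq_sum_range]
          rw [show m + 1 - (j + 1) = m - j by omega]
      _ ≤ ∑ t ∈ Finset.range (m - j), (B * C1 * 2 ^ (m - j - 1) * ε ^ (j + 1)) * (1 / 4) ^ t :=
          Finset.sum_le_sum hterm
      _ = (B * C1 * 2 ^ (m - j - 1) * ε ^ (j + 1)) * ∑ t ∈ Finset.range (m - j), ((1:ℝ) / 4) ^ t := by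
          rw [Finset.mul_sum]
      _ ≤ (B * C1 * 2 ^ (m - j - 1) * ε ^ (j + 1)) * (4 / 3) :=
          mul_le_mul_of_nonneg_left hgeo (by positivity)
      _ = (4 / 3) * (B * C1 * 2 ^ (m - j - 1) * ε ^ (j + 1)) := by ring
  -- the tail is beaten by the head
  have hP : B * C1 * 2 ^ (m - j - 1) * 2 ^ j = D := by
    have h2 : (2:ℝ) ^ (m - j - 1) * 2 ^ (j + 1) = 2 ^ m := by
      rw [← pow_add]; congr 1; omega
    rw [hB, hD, hC1def, mul_pow]
    rw [pow_succ] at h2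
    linear_combination ((n:ℝ) * W * (M:ℝ) ^ m * (m.choose (j+1) : ℝ)) * h2
  have hPpos : (0:ℝ) < B * C1 * 2 ^ (m - j - 1) :=
    mul_pos (mul_pos hBpos hC1) (pow_pos (by norm_num : (0:ℝ) < 2) _)
  have h2jpos : (0:ℝ) < 2 ^ j := by positivity
  have hPε : (B * C1 * 2 ^ (m - j - 1)) * ε < 1 / 2 := by
    have h1 := hDε
    rw [← hP] at h1
    have e1 : ε * (B * C1 * 2 ^ (m - j - 1) * 2 ^ j)
        = (B * C1 * 2 ^ (m - j - 1) * ε) * 2 ^ j := by ring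
    have e2 : (2:ℝ) ^ j / 2 = (1 / 2) * 2 ^ j := by ring
    rw [e1, e2] at h1
    exact lt_of_mul_lt_mul_right h1 h2jpos.le
  have hKsmall : (4 / 3) * (B * C1 * 2 ^ (m - j - 1) * ε ^ (j + 1)) < ε ^ j := by
    have hεp : ε ^ (j + 1) = ε ^ j * ε := pow_succ ε j
    have e1 : (4 / 3) * (B * C1 * 2 ^ (m - j - 1) * (ε ^ j * ε))
        = ((4 / 3) * (B * C1 * 2 ^ (m - j - 1) * ε)) * ε ^ j := by ring
    rw [hεp, e1]
    have h43 : (4 / 3) * (B * C1 * 2 ^ (m - j - 1) * ε) < 1 := by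
      have e3 : (4:ℝ) / 3 * (B * C1 * 2 ^ (m - j - 1) * ε)
          = (4 / 3) * ((B * C1 * 2 ^ (m - j - 1)) * ε) := by ring
      rw [e3]
      linarith
    calc ((4 / 3) * (B * C1 * 2 ^ (m - j - 1) * ε)) * ε ^ j
        < 1 * ε ^ j := mul_lt_mul_of_pos_right h43 (pow_pos hε j)
      _ = ε ^ j := one_mul _
  -- conclude
  have h1abs : (1:ℝ) ≤ |(g j : ℝ)| := by exact_mod_cast Int.one_le_abs hgj
  have hfirst : ε ^ j ≤ |(-ε) ^ j * (g j : ℝ)| := by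
    rw [abs_mul, abs_pow, abs_neg, abs_of_pos hε]
    nlinarith [pow_pos hε j]
  intro hzero
  rw [hzero] at expand
  rw [hsplit] at expand
  have hft : (-ε) ^ j * (g j : ℝ)
      = -(∑ i ∈ Finset.Ico (j + 1) (m + 1), (-ε) ^ i * (g i : ℝ)) := by linarith
  have habs : |(-ε) ^ j * (g j : ℝ)|
      = |∑ i ∈ Finset.Ico (j + 1) (m + 1), (-ε) ^ i * (g i : ℝ)| := by
    rw [hft, abs_neg]
  linarith
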